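/- arXiv:2001.08122 — 6 statements merged into one kernel-verified Lean document; each statement's English description precedes it below -/
import Mathlib

section
/- For every finite simple graph G, itp(G) ≤ 2^{vc(G)} + vc(G), where vc(G) denotes the minimum size of a vertex cover of G. -/
open scoped Classical

open scoped Classical

/-- Two vertices have the same type iff `N(v) \ {u} = N(u) \ {v}`. -/
def sameType {V : Type*} (G : SimpleGraph V) (u v : V) : Prop :=
  G.neighborSet v \ {u} = G.neighborSet u \ {v}

theorem sameType_equivalence {V : Type*} (G : SimpleGraph V) : Equivalence (sameType G) := by
  constructor
  · intro u; rfl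
  · intro u v h; exact h.symm
  · intro u v w h1 h2
    have h1' : ∀ x : V, (G.Adj v x ∧ x ≠ u) ↔ (G.Adj u x ∧ x ≠ v) := by
      intro x
      have := Set.ext_iff.mp h1 x
      simpa [Set.mem_diff, SimpleGraph.mem_neighborSet, Set.mem_singleton_iff] using this
    have h2' : ∀ x : V, (G.Adj w x ∧ x ≠ v) ↔ (G.Adj v x ∧ x ≠ w) := by
      intro x
      have := Set.ext_iff.mp h2 x
      simpa [Set.mem_diff, SimpleGraph.mem_neighborSet, Set.mem_singleton_iff] using this
    ext x
    simp only [Set.mem_diff, SimpleGraph.mem_neighborSet, Set.mem_singleton_iff]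
    by_cases hxv : x = v
    · subst hxv
      by_cases huw : w = u
      · subst huw; tauto
      · constructor
        · rintro ⟨hadj, hxu⟩
          have h3 : G.Adj u w ∧ w ≠ x := (h1' w).mp ⟨hadj.symm, huw⟩
          have h5 : G.Adj x u ∧ u ≠ w := (h2' u).mp ⟨h3.1.symm, Ne.symm hxu⟩
          exact ⟨h5.1.symm, hadj.ne'⟩
        · rintro ⟨hadj, hxw⟩
          have h5 : G.Adj w u ∧ u ≠ x := (h2' u).mpr ⟨hadj.symm, Ne.symm huw⟩
          have h3 : G.Adj x w ∧ w ≠ u := (h1' w).mpr ⟨h5.1.symm, Ne.symm hxw⟩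
          exact ⟨h3.1.symm, Ne.symm h5.2⟩
    · constructor
      · rintro ⟨hadj, hxu⟩
        have t1 := (h2' x).mp ⟨hadj, hxv⟩
        have t2 := (h1' x).mp ⟨t1.1, hxu⟩
        exact ⟨t2.1, t1.2⟩
      · rintro ⟨hadj, hxw⟩
        have t1 := (h1' x).mpr ⟨hadj, hxv⟩
        have t2 := (h2' x).mpr ⟨t1.1, hxw⟩
        exact ⟨t2.1, t1.2⟩

/-- The setoid of the same-type relation. -/
def typeSetoid {V : Type*} (G : SimpleGraph V) : Setoid V :=
  ⟨sameType G, sameType_equivalence G⟩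

/-- The class of the type partition corresponding to a vertex of the type graph. -/
def typeClass {V : Type*} (G : SimpleGraph V) (x : Quotient (typeSetoid G)) : Set V :=
  {v | Quotient.mk (typeSetoid G) v = x}

/-- The type graph: one vertex per class of the type partition, two distinct classes
being adjacent iff every vertex of one is adjacent to every vertex of the other. -/
def typeGraph {V : Type*} (G : SimpleGraph V) : SimpleGraph (Quotient (typeSetoid G)) where
  Adj x y := x ≠ y ∧ ∀ u v : V,
    Quotient.mk (typeSetoid G) u = x → Quotient.mk (typeSetoid G) v = y → G.Adj u v
  symm := by
    constructor
    rintro x y ⟨hxy, h⟩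
    exact ⟨hxy.symm, fun u v hu hv => (h v u hv hu).symm⟩
  loopless := by constructor; rintro x ⟨hxx, -⟩; exact hxx rfl

/-- A base graph is one whose type partition consists only of singletons. -/
def IsBaseGraph {V : Type*} (G : SimpleGraph V) : Prop :=
  ∀ u v : V, sameType G u v → u = v

noncomputable def itpAux : (n : ℕ) → (V : Type u) → SimpleGraph V → ℕ
  | 0, V, _ => Nat.card V
  | n + 1, V, G => if IsBaseGraph G then Nat.card V else itpAux n _ (typeGraph G)

/-- The iterated type partition number: the number of vertices of the first base graph
in the sequence `H⁰ = G`, `Hⁱ = typeGraph Hⁱ⁻¹`. -/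
noncomputable def itp {V : Type u} (G : SimpleGraph V) : ℕ :=
  itpAux (Nat.card V) V G

/-- The neighborhood diversity: the number of classes of the type partition. -/
noncomputable def nd {V : Type*} (G : SimpleGraph V) : ℕ :=
  Nat.card (Quotient (typeSetoid G))

/-- A vertex cover: a set of vertices meeting every edge. -/
def IsVertexCover {V : Type*} (G : SimpleGraph V) (C : Set V) : Prop :=
  ∀ ⦃u v⦄, G.Adj u v → u ∈ C ∨ v ∈ C

/-- The minimum size of a vertex cover. -/
noncomputable def vcNum {V : Type*} (G : SimpleGraph V) : ℕ :=
  sInf {n | ∃ C : Set V, IsVertexCover G C ∧ C.ncard = n}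


universe u

lemma itpAux_le_card : ∀ (n : ℕ) (V : Type u) [Finite V] (G : SimpleGraph V),
    itpAux n V G ≤ Nat.card V
  | 0, V, _, G => le_rfl
  | n + 1, V, _, G => by
    rw [itpAux]
    split
    · exact le_rfl
    · calc itpAux n _ (typeGraph G) ≤ Nat.card (Quotient (typeSetoid G)) :=
            itpAux_le_card n _ (typeGraph G)
        _ ≤ Nat.card V :=
            Nat.card_le_card_of_surjective _ Quotient.mk''_surjective

lemma nd_le_bound {V : Type} [Fintype V] (G : SimpleGraph V) (C : Set V)
    (hC : IsVertexCover G C) : nd G ≤ 2 ^ C.ncard + C.ncard := by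
  classical
  have hout : ∀ {u : V}, u ∉ C → ∀ {w : V}, G.Adj u w → w ∈ C := by
    intro u hu w hadj
    rcases hC hadj with h | h
    · exact absurd h hu
    · exact h
  set f : Quotient (typeSetoid G) → (Set ↥C) ⊕ ↥C := fun x =>
    if h : x.out ∈ C then Sum.inr ⟨x.out, h⟩ else Sum.inl {c | G.Adj x.out c} with hf
  have hinj : Function.Injective f := by
    intro x y hxy
    simp only [hf] at hxy
    by_cases hx : x.out ∈ C <;> by_cases hy : y.out ∈ C
    · rw [dif_pos hx, dif_pos hy] at hxy
      have : x.out = y.out := congrArg Subtype.val (Sum.inr.inj hxy)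
      rw [← Quotient.out_eq x, ← Quotient.out_eq y, this]
    · rw [dif_pos hx, dif_neg hy] at hxy; exact absurd hxy (by simp)
    · rw [dif_neg hx, dif_pos hy] at hxy; exact absurd hxy (by simp)
    · rw [dif_neg hx, dif_neg hy] at hxy
      -- both outside C
      have heq : ∀ c : ↥C, G.Adj x.out c ↔ G.Adj y.out c := by
        intro c
        have := Set.ext_iff.mp (Sum.inl.inj hxy) c
        simpa using this
    -- derive sameType
      have hnadjxy : ¬ G.Adj x.out y.out := by
        intro h
        rcases hC h with h' | h'
        · exact hx h'
        · exact hy h'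
      have hst : sameType G x.out y.out := by
        ext w
        simp only [Set.mem_diff, SimpleGraph.mem_neighborSet, Set.mem_singleton_iff]
        constructor
        · rintro ⟨hadj, -⟩
          have hwC : w ∈ C := hout hy hadj
          have : G.Adj x.out w := (heq ⟨w, hwC⟩).mpr hadj
          exact ⟨this, fun h => hy (h ▸ hwC)⟩
        · rintro ⟨hadj, -⟩
          have hwC : w ∈ C := hout hx hadj
          have : G.Adj y.out w := (heq ⟨w, hwC⟩).mp hadj
          exact ⟨this, fun h => hx (h ▸ hwC)⟩
      rw [← Quotient.out_eq x, ← Quotient.out_eq y]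
      exact Quotient.sound hst
  have h1 : nd G ≤ Nat.card ((Set ↥C) ⊕ ↥C) :=
    Nat.card_le_card_of_injective f hinj
  have h2 : Nat.card ((Set ↥C) ⊕ ↥C) = 2 ^ C.ncard + C.ncard := by
    rw [Nat.card_sum, Nat.card_eq_fintype_card, Fintype.card_set,
      ← Nat.card_coe_set_eq, Nat.card_eq_fintype_card]
  exact h2 ▸ h1

/-- `itp(G) ≤ 2 ^ vc(G) + vc(G)`. -/
theorem itp_le_two_pow_vc {V : Type} [Fintype V] (G : SimpleGraph V) :
    itp G ≤ 2 ^ vcNum G + vcNum G := by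
  classical
  have hmem : vcNum G ∈ {n | ∃ C : Set V, IsVertexCover G C ∧ C.ncard = n} :=
    Nat.sInf_mem ⟨(Set.univ : Set V).ncard, Set.univ, fun u v _ => Or.inl trivial, rfl⟩
  obtain ⟨C, hC, hcard⟩ := hmem
  have hnd : nd G ≤ 2 ^ vcNum G + vcNum G := hcard ▸ nd_le_bound G C hC
  rw [itp]
  cases hn : Nat.card V with
  | zero =>
    rw [itpAux, hn]
    exact Nat.zero_le _
  | succ n =>
    rw [itpAux]
    split
    · next hbase =>
      have hbij : Function.Bijective (Quotient.mk (typeSetoid G)) := by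
        constructor
        · intro u v h
          exact hbase u v (Quotient.exact h)
        · exact Quotient.mk''_surjective
      have : Nat.card V = nd G := Nat.card_eq_of_bijective _ hbij
      exact this ▸ hnd
    · exact le_trans (itpAux_le_card n _ _) hnd
end

section
/- If the Bin-Packing instance (A = {a_1,...,a_ℓ}, k, B) is a YES instance, then the reduction graph G built from it admits an equitable (k+3)-coloring. -/
open scoped Classical

/-- Vertices of the `(k,ℓ,B)`-chain: independent sets `S_1,…,S_{k+1}` with
`|S_i| = B` for `i ≤ k` and `|S_{k+1}| = ℓ+1`. -/
abbrev ChainV (l k B : ℕ) : Type :=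
  (i : Fin (k + 1)) × Fin (if (i : ℕ) < k then B else l + 1)

/-- Vertices of the flowers `F_{a_1,k},…,F_{a_ℓ,k}, F_{B,k}`: the flower index
`j : Option (Fin ℓ)` (with `none` standing for `F_{B,k}`), and inside a flower either the
central vertex (`none`) or a vertex `(i,p)` of the `i`-th clique of size `k`. -/
abbrev FlowerV (l k B : ℕ) (a : Fin l → ℕ) : Type :=
  (j : Option (Fin l)) × Option (Fin (j.elim B a + 1) × Fin k)

/-- Vertices of the reduction graph: flower vertices plus the vertices of two chains. -/
abbrev RV (l k B : ℕ) (a : Fin l → ℕ) : Type :=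
  FlowerV l k B a ⊕ (Fin 2 × ChainV l k B)

/-- The reduction graph built from the Bin-Packing instance `(a_1,…,a_ℓ; k; B)`:
the disjoint union of two `(k,ℓ,B)`-chains and of the flowers
`F_{a_1,k},…,F_{a_ℓ,k},F_{B,k}`, plus all edges between flower and chain vertices. -/
def reductionGraph (l k B : ℕ) (a : Fin l → ℕ) : SimpleGraph (RV l k B a) where
  Adj x y :=
    match x, y with
    | Sum.inl f, Sum.inl f' =>
        f.1 = f'.1 ∧ f ≠ f' ∧
          ∀ (i : Fin (f.1.elim B a + 1)) (p : Fin k) (i' : Fin (f'.1.elim B a + 1))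
            (p' : Fin k), f.2 = some (i, p) → f'.2 = some (i', p') → (i : ℕ) = (i' : ℕ)
    | Sum.inl _, Sum.inr _ => True
    | Sum.inr _, Sum.inl _ => True
    | Sum.inr q, Sum.inr q' =>
        q.1 = q'.1 ∧ ((q.2.1 : ℕ) + 1 = (q'.2.1 : ℕ) ∨ (q'.2.1 : ℕ) + 1 = (q.2.1 : ℕ))
  symm := by
    constructor
    rintro (f | q) (f' | q') h
    · exact ⟨h.1.symm, h.2.1.symm, fun i p i' p' h1 h2 => (h.2.2 i' p' i p h2 h1).symm⟩
    · trivial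
    · trivial
    · exact ⟨h.1.symm, h.2.symm⟩
  loopless := by
    constructor
    rintro (f | q) h
    · exact h.2.1 rfl
    · rcases h.2 with h' | h' <;> omega
/-- `c` is an equitable coloring of `G` with exactly `m` colors. -/
def IsEquitableColoring {V : Type*} (G : SimpleGraph V) (m : ℕ) (c : V → Fin m) : Prop :=
  (∀ ⦃u v⦄, G.Adj u v → c u ≠ c v) ∧ Function.Surjective c ∧
    ∀ q : Fin m, Nat.card {v // c v = q} = Nat.card V / m ∨
      Nat.card {v // c v = q} = (Nat.card V + m - 1) / m
def cVal (l k B : ℕ) (a : Fin l → ℕ) (P : Fin l → Fin k) : RV l k B a → ℕ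
  | Sum.inl ⟨j, none⟩ => j.elim k fun j' => (P j' : ℕ)
  | Sum.inl ⟨j, some (_, p)⟩ =>
      if (p : ℕ) < j.elim k (fun j' => (P j' : ℕ)) then (p : ℕ) else (p : ℕ) + 1
  | Sum.inr (t, ⟨i, _⟩) => if ((i : ℕ) + (t : ℕ)) % 2 = 0 then k + 1 else k + 2

lemma clique_count (k cj qv : ℕ) (hcj : cj ≤ k) :
    (∑ p : Fin k, if (if (p : ℕ) < cj then (p : ℕ) else (p : ℕ) + 1) = qv then 1 else 0)
      = if qv ≤ k ∧ qv ≠ cj then 1 else 0 := by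
  classical
  rw [Finset.sum_boole]
  by_cases h : qv ≤ k ∧ qv ≠ cj
  · rw [if_pos h]
    have hb : (if qv < cj then qv else qv - 1) < k := by split_ifs <;> omega
    rw [Nat.cast_id, Finset.card_eq_one]
    refine ⟨⟨_, hb⟩, ?_⟩
    ext p
    have hp := p.isLt
    simp only [Finset.mem_filter, Finset.mem_univ, true_and, Finset.mem_singleton,
      Fin.ext_iff]
    constructor <;> (intro hc; split_ifs at hc ⊢ <;> omega)
  · rw [if_neg h, Nat.cast_id, Finset.card_eq_zero, Finset.filter_eq_empty_iff]
    intro p _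
    have hp := p.isLt
    split_ifs <;> omega

lemma chain_size (l k B : ℕ) :
    (∑ i : Fin (k + 1), (if (i : ℕ) < k then B else l + 1)) = k * B + (l + 1) := by
  rw [Fin.sum_univ_castSucc]
  simp only [Fin.coe_castSucc, Fin.val_last, lt_irrefl, if_neg (lt_irrefl k)]
  have : ∀ i : Fin k, (if (i : ℕ) < k then B else l + 1) = B := fun i => if_pos i.isLt
  rw [Finset.sum_congr rfl fun i _ => this i, Finset.sum_const, Finset.card_univ,
    Fintype.card_fin, smul_eq_mul]
  simp

lemma cVal_inl (l k B : ℕ) (a : Fin l → ℕ) (P : Fin l → Fin k)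
    (j : Option (Fin l)) (fo : Option (Fin (j.elim B a + 1) × Fin k)) :
    cVal l k B a P (Sum.inl ⟨j, fo⟩) =
      fo.elim (j.elim k fun j' => (P j' : ℕ))
        (fun x => if (x.2 : ℕ) < j.elim k (fun j' => (P j' : ℕ)) then (x.2 : ℕ)
          else (x.2 : ℕ) + 1) := by
  cases fo with
  | none => rfl
  | some x => cases x; rfl

lemma cVal_inr (l k B : ℕ) (a : Fin l → ℕ) (P : Fin l → Fin k)
    (t : Fin 2) (q : ChainV l k B) :
    cVal l k B a P (Sum.inr (t, q)) =
      if ((q.1 : ℕ) + (t : ℕ)) % 2 = 0 then k + 1 else k + 2 := by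
  cases q; rfl

lemma cj_le (l k : ℕ) (P : Fin l → Fin k) (j : Option (Fin l)) :
    (j.elim k fun j' => (P j' : ℕ)) ≤ k := by
  cases j with
  | none => exact le_rfl
  | some j' => exact (P j').isLt.le

lemma cVal_inl_le (l k B : ℕ) (a : Fin l → ℕ) (P : Fin l → Fin k)
    (f : FlowerV l k B a) : cVal l k B a P (Sum.inl f) ≤ k := by
  obtain ⟨j, fo⟩ := f
  rw [cVal_inl]
  cases fo with
  | none => exact cj_le l k P j
  | some x =>
    have h1 := x.2.isLt
    have h2 := cj_le l k P j
    simp only [Option.elim_none, Option.elim_some]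
    split_ifs <;> omega

lemma cVal_inr_mem (l k B : ℕ) (a : Fin l → ℕ) (P : Fin l → Fin k)
    (x : Fin 2 × ChainV l k B) :
    cVal l k B a P (Sum.inr x) = k + 1 ∨ cVal l k B a P (Sum.inr x) = k + 2 := by
  obtain ⟨t, q⟩ := x
  rw [cVal_inr]
  split_ifs <;> simp

lemma cVal_lt (l k B : ℕ) (a : Fin l → ℕ) (P : Fin l → Fin k) (v : RV l k B a) :
    cVal l k B a P v < k + 3 := by
  cases v with
  | inl f => have := cVal_inl_le l k B a P f; omega
  | inr x => rcases cVal_inr_mem l k B a P x with h | h <;> omega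

lemma flower_one (n k cj qv : ℕ) (hcj : cj ≤ k) :
    (∑ fo : Option (Fin n × Fin k),
      if fo.elim cj (fun x => if (x.2 : ℕ) < cj then (x.2 : ℕ) else (x.2 : ℕ) + 1) = qv
        then 1 else 0)
    = (if cj = qv then 1 else 0) + n * (if qv ≤ k ∧ qv ≠ cj then 1 else 0) := by
  rw [Fintype.sum_option]
  congr 1
  rw [Fintype.sum_prod_type]
  simp only [Option.elim_none, Option.elim_some]
  rw [Finset.sum_congr rfl (fun i _ => clique_count k cj qv hcj), Finset.sum_const,
    Finset.card_univ, Fintype.card_fin, smul_eq_mul]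

lemma flower_sum (l k B : ℕ) (a : Fin l → ℕ) (P : Fin l → Fin k)
    (hP : ∀ i : Fin k, ∑ j ∈ Finset.univ.filter fun j => P j = i, a j = B)
    (hsum : ∑ j, a j = k * B) (qv : ℕ) :
    (∑ f : FlowerV l k B a, if cVal l k B a P (Sum.inl f) = qv then 1 else 0)
      = if qv ≤ k then k * B + l + 1 else 0 := by
  classical
  rw [← Finset.univ_sigma_univ, Finset.sum_sigma]
  have step : ∀ j : Option (Fin l),
      (∑ fo : Option (Fin (j.elim B a + 1) × Fin k),
        if cVal l k B a P (Sum.inl ⟨j, fo⟩) = qv then 1 else 0)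
      = (if (j.elim k fun j' => (P j' : ℕ)) = qv then 1 else 0) +
          (j.elim B a + 1) *
            (if qv ≤ k ∧ qv ≠ (j.elim k fun j' => (P j' : ℕ)) then 1 else 0) := by
    intro j
    rw [Finset.sum_congr rfl fun fo _ => by rw [cVal_inl]]
    exact flower_one _ k _ qv (cj_le l k P j)
  rw [Finset.sum_congr rfl fun j _ => step j, Fintype.sum_option]
  rw [Option.elim_none, Option.elim_none]
  simp only [Option.elim_none, Option.elim_some]
  have hl : ∑ j' : Fin l, (a j' + 1) = k * B + l := by
    rw [Finset.sum_add_distrib, hsum, Finset.sum_const, Finset.card_univ, Fintype.card_fin,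
      smul_eq_mul, mul_one]
  rcases lt_trichotomy qv k with h | h | h
  · rw [if_pos h.le]
    set qF : Fin k := ⟨qv, h⟩ with hqF
    have key : ∀ j' : Fin l,
        ((if ((P j' : ℕ)) = qv then 1 else 0) +
          (a j' + 1) * (if qv ≤ k ∧ qv ≠ (P j' : ℕ) then 1 else 0))
        = (if P j' = qF then 1 else a j' + 1) := by
      intro j'
      by_cases hpj : P j' = qF
      · have : (P j' : ℕ) = qv := by rw [hpj]
        rw [if_pos hpj, if_pos this, if_neg (fun e => e.2 this.symm), mul_zero, add_zero]
      · have : (P j' : ℕ) ≠ qv := by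
          intro hval; exact hpj (Fin.ext hval)
        rw [if_neg hpj, if_neg this, if_pos ⟨h.le, fun e => this e.symm⟩, mul_one,
          zero_add]
    erw [Finset.sum_congr rfl fun j' _ => key j']
    have h2 : (∑ j' : Fin l, (if P j' = qF then 1 else a j' + 1)) +
        (∑ j' : Fin l, (if P j' = qF then a j' else 0)) = ∑ j' : Fin l, (a j' + 1) := by
      rw [← Finset.sum_add_distrib]
      refine Finset.sum_congr rfl fun j' _ => ?_
      split_ifs <;> omega
    have h3 : (∑ j' : Fin l, (if P j' = qF then a j' else 0)) = B := by
      rw [← Finset.sum_filter]; exact hP qF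
    have hne : ¬(k = qv) := by omega
    rw [if_neg hne, if_pos ⟨h.le, by omega⟩]
    omega
  · subst h
    have hks : ∀ j' : Fin l,
        ((if ((P j' : ℕ)) = qv then 1 else 0) +
          (a j' + 1) * (if qv ≤ qv ∧ qv ≠ (P j' : ℕ) then 1 else 0)) = a j' + 1 := by
      intro j'
      have := (P j').isLt
      rw [if_neg (by omega), if_pos ⟨le_rfl, by omega⟩, mul_one, zero_add]
    erw [Finset.sum_congr rfl fun j' _ => hks j']
    rw [hl, if_pos rfl, if_neg (by omega),
      if_pos le_rfl]
    omega
  · have hall : ∀ j' : Fin l,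
        ((if ((P j' : ℕ)) = qv then 1 else 0) +
          (a j' + 1) * (if qv ≤ k ∧ qv ≠ (P j' : ℕ) then 1 else 0)) = 0 := by
      intro j'
      have := (P j').isLt
      rw [if_neg (by omega), if_neg (by omega), mul_zero, zero_add]
    erw [Finset.sum_congr rfl fun j' _ => hall j']
    rw [Finset.sum_const_zero,
      if_neg (show ¬(k = qv) by omega), if_neg (show ¬(qv ≤ k ∧ qv ≠ k) by omega),
      mul_zero, if_neg (by omega)]
    omega

lemma chain_sum (l k B : ℕ) (a : Fin l → ℕ) (P : Fin l → Fin k) (qv : ℕ) (hq : qv < k + 3) :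
    (∑ x : Fin 2 × ChainV l k B, if cVal l k B a P (Sum.inr x) = qv then 1 else 0)
      = if k + 1 ≤ qv then k * B + l + 1 else 0 := by
  classical
  have hx : ∀ x : Fin 2 × ChainV l k B,
      (if cVal l k B a P (Sum.inr x) = qv then 1 else 0)
      = (if (if ((x.2.1 : ℕ) + (x.1 : ℕ)) % 2 = 0 then k + 1 else k + 2) = qv
          then 1 else 0) := by
    intro ⟨t, q⟩; rw [cVal_inr]
  rw [Finset.sum_congr rfl fun x _ => hx x, Fintype.sum_prod_type]
  have hin : ∀ t : Fin 2,
      (∑ q : ChainV l k B,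
        if (if ((q.1 : ℕ) + (t : ℕ)) % 2 = 0 then k + 1 else k + 2) = qv then 1 else 0)
      = ∑ i : Fin (k + 1), (if (i : ℕ) < k then B else l + 1) *
          (if (if ((i : ℕ) + (t : ℕ)) % 2 = 0 then k + 1 else k + 2) = qv then 1 else 0) := by
    intro t
    rw [← Finset.univ_sigma_univ, Finset.sum_sigma]
    refine Finset.sum_congr rfl fun i _ => ?_
    dsimp only
    trans ∑ _s : Fin (if (i : ℕ) < k then B else l + 1),
      (if (if ((i : ℕ) + (t : ℕ)) % 2 = 0 then k + 1 else k + 2) = qv then 1 else 0)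
    · rfl
    rw [Finset.sum_const, Finset.card_univ, Fintype.card_fin, smul_eq_mul]
  rw [Finset.sum_congr rfl fun t _ => hin t, Fin.sum_univ_two, ← Finset.sum_add_distrib]
  by_cases hq1 : k + 1 ≤ qv
  · rw [if_pos hq1]
    have key : ∀ i : Fin (k + 1),
        (if (i : ℕ) < k then B else l + 1) *
            (if (if ((i : ℕ) + ((0 : Fin 2) : ℕ)) % 2 = 0 then k + 1 else k + 2) = qv
              then 1 else 0) +
          (if (i : ℕ) < k then B else l + 1) *
            (if (if ((i : ℕ) + ((1 : Fin 2) : ℕ)) % 2 = 0 then k + 1 else k + 2) = qv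
              then 1 else 0)
        = (if (i : ℕ) < k then B else l + 1) := by
      intro i
      have h0 : ((0 : Fin 2) : ℕ) = 0 := rfl
      have h1 : ((1 : Fin 2) : ℕ) = 1 := rfl
      rw [h0, h1]
      split_ifs <;> omega
    rw [Finset.sum_congr rfl fun i _ => key i, chain_size]
    omega
  · rw [if_neg hq1]
    have key : ∀ i : Fin (k + 1),
        (if (i : ℕ) < k then B else l + 1) *
            (if (if ((i : ℕ) + ((0 : Fin 2) : ℕ)) % 2 = 0 then k + 1 else k + 2) = qv
              then 1 else 0) +
          (if (i : ℕ) < k then B else l + 1) *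
            (if (if ((i : ℕ) + ((1 : Fin 2) : ℕ)) % 2 = 0 then k + 1 else k + 2) = qv
              then 1 else 0) = 0 := by
      intro i
      split_ifs <;> omega
    rw [Finset.sum_congr rfl fun i _ => key i, Finset.sum_const, smul_eq_mul, mul_zero]

/-- If the Bin-Packing instance is a YES instance, the reduction graph admits an
equitable `(k+3)`-coloring. -/
theorem equitable_of_binpacking (l k B : ℕ) (a : Fin l → ℕ)
    (ha : ∀ j, 0 < a j) (hk : 0 < k) (hB : 0 < B)
    (hyes : ∃ P : Fin l → Fin k, ∀ i : Fin k,
      ∑ j ∈ Finset.univ.filter fun j => P j = i, a j = B) :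
    ∃ c : RV l k B a → Fin (k + 3),
      IsEquitableColoring (reductionGraph l k B a) (k + 3) c := by
  classical
  obtain ⟨P, hP⟩ := hyes
  have hsum : ∑ j, a j = k * B := by
    rw [← Finset.sum_fiberwise Finset.univ P a,
      Finset.sum_congr rfl fun i _ => hP i, Finset.sum_const, Finset.card_univ,
      Fintype.card_fin, smul_eq_mul]
  set c : RV l k B a → Fin (k + 3) :=
    fun v => ⟨cVal l k B a P v, cVal_lt l k B a P v⟩ with hc
  have hfilter : ∀ q : Fin (k + 3),
      (Finset.univ.filter fun v => c v = q).card = k * B + l + 1 := by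
    intro q
    rw [Finset.card_filter]
    have hcv : ∀ v, (if c v = q then (1 : ℕ) else 0)
        = (if cVal l k B a P v = (q : ℕ) then (1 : ℕ) else 0) := by
      intro v
      simp only [hc, Fin.ext_iff]
    rw [Finset.sum_congr rfl fun v _ => hcv v, Fintype.sum_sum_type,
      flower_sum l k B a P hP hsum (q : ℕ), chain_sum l k B a P (q : ℕ) q.isLt]
    have := q.isLt
    split_ifs <;> omega
  have hcard : Fintype.card (RV l k B a) = (k + 3) * (k * B + l + 1) := by
    rw [← Finset.card_univ,
      Finset.card_eq_sum_card_fiberwise (f := c) (t := Finset.univ)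
        (fun x _ => Finset.mem_univ _),
      Finset.sum_congr rfl fun q _ => hfilter q, Finset.sum_const, Finset.card_univ,
      Fintype.card_fin, smul_eq_mul]
  have hcval : ∀ v, ((c v : Fin (k + 3)) : ℕ) = cVal l k B a P v := fun v => rfl
  refine ⟨c, ?_, ?_, ?_⟩
  · -- proper coloring
    rintro (⟨j, fo⟩ | ⟨t, i, si⟩) (⟨j', fo'⟩ | ⟨t', i', si'⟩) hadj hcc
    · obtain ⟨hj, hne, hcl⟩ := hadj
      have hval : cVal l k B a P (Sum.inl ⟨j, fo⟩) = cVal l k B a P (Sum.inl ⟨j', fo'⟩) :=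
        congrArg Fin.val hcc
      dsimp only at hj
      subst hj
      cases fo with
      | none =>
        cases fo' with
        | none => exact hne rfl
        | some x =>
          rw [cVal_inl, cVal_inl] at hval
          simp only [Option.elim_none, Option.elim_some] at hval
          split_ifs at hval <;> omega
      | some x =>
        cases fo' with
        | none =>
          rw [cVal_inl, cVal_inl] at hval
          simp only [Option.elim_none, Option.elim_some] at hval
          split_ifs at hval <;> omega
        | some y =>
          have hi : (x.1 : ℕ) = (y.1 : ℕ) :=
            hcl x.1 x.2 y.1 y.2 (by rw [Prod.mk.eta]) (by rw [Prod.mk.eta])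
          rw [cVal_inl, cVal_inl] at hval
          simp only [Option.elim_some] at hval
          have hp : (x.2 : ℕ) = (y.2 : ℕ) := by split_ifs at hval <;> omega
          have hx1 : x.1 = y.1 := Fin.ext hi
          have hx2 : x.2 = y.2 := Fin.ext hp
          exact hne (by rw [Prod.ext hx1 hx2])
    · have h1 := cVal_inl_le l k B a P ⟨j, fo⟩
      have h2 := cVal_inr_mem l k B a P (t', ⟨i', si'⟩)
      have hval : cVal l k B a P (Sum.inl ⟨j, fo⟩)
          = cVal l k B a P (Sum.inr (t', ⟨i', si'⟩)) := congrArg Fin.val hcc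
      rcases h2 with h2 | h2 <;> omega
    · have h1 := cVal_inl_le l k B a P ⟨j', fo'⟩
      have h2 := cVal_inr_mem l k B a P (t, ⟨i, si⟩)
      have hval : cVal l k B a P (Sum.inr (t, ⟨i, si⟩))
          = cVal l k B a P (Sum.inl ⟨j', fo'⟩) := congrArg Fin.val hcc
      rcases h2 with h2 | h2 <;> omega
    · obtain ⟨ht, hor⟩ := hadj
      have hval : cVal l k B a P (Sum.inr (t, ⟨i, si⟩))
          = cVal l k B a P (Sum.inr (t', ⟨i', si'⟩)) := congrArg Fin.val hcc
      dsimp only at ht hor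
      subst ht
      rw [cVal_inr, cVal_inr] at hval
      dsimp only at hval
      split_ifs at hval <;> omega
  · -- surjective
    intro q
    have hq := q.isLt
    rcases Nat.lt_or_ge (q : ℕ) k with h | h
    · refine ⟨Sum.inl ⟨none, some (⟨0, Nat.succ_pos _⟩, ⟨(q : ℕ), h⟩)⟩, ?_⟩
      apply Fin.ext
      rw [hcval, cVal_inl]
      simp only [Option.elim_some, Option.elim_none]
      simp [h]
    · by_cases h1 : (q : ℕ) = k
      · refine ⟨Sum.inl ⟨none, none⟩, ?_⟩
        apply Fin.ext
        rw [hcval, cVal_inl]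
        simp [h1]
      · by_cases h2 : (q : ℕ) = k + 1
        · refine ⟨Sum.inr (⟨0, by omega⟩, ⟨⟨0, by omega⟩, ⟨0, ?_⟩⟩), ?_⟩
          · show 0 < if ((⟨0, by omega⟩ : Fin (k + 1)) : ℕ) < k then B else l + 1
            simp only [Fin.val_mk]
            rw [if_pos hk]
            exact hB
          · apply Fin.ext
            rw [hcval, cVal_inr]
            simp [h2]
        · have h3 : (q : ℕ) = k + 2 := by omega
          refine ⟨Sum.inr (⟨1, by omega⟩, ⟨⟨0, by omega⟩, ⟨0, ?_⟩⟩), ?_⟩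
          · show 0 < if ((⟨0, by omega⟩ : Fin (k + 1)) : ℕ) < k then B else l + 1
            simp only [Fin.val_mk]
            rw [if_pos hk]
            exact hB
          · apply Fin.ext
            rw [hcval, cVal_inr]
            simp [h3]
  · -- equitable
    intro q
    left
    rw [Nat.card_eq_fintype_card, Fintype.card_subtype, hfilter q,
      Nat.card_eq_fintype_card, hcard,
      Nat.mul_div_cancel_left _ (show 0 < k + 3 by omega)]
end

section
/- In every equitable (k+3)-coloring of the reduction graph G built from a Bin-Packing instance (A = {a_1,...,a_ℓ}, k, B), exactly two colors occur on the vertices of the two chains Q' and Q'', and neither of these two colors occurs on any vertex of the flowers F_{B,k}, F_{a_1,k},...,F_{a_ℓ,k}. -/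
open scoped Classical

/-- In every equitable `(k+3)`-coloring of the reduction graph, exactly two colors occur
on the chain vertices, and neither of them occurs on any flower vertex. -/
theorem chain_uses_two_colors (l k B : ℕ) (a : Fin l → ℕ)
    (ha : ∀ j, 0 < a j) (hk : 0 < k) (hB : 0 < B)
    (c : RV l k B a → Fin (k + 3))
    (hc : IsEquitableColoring (reductionGraph l k B a) (k + 3) c) :
    {q : Fin (k + 3) | ∃ v : Fin 2 × ChainV l k B, c (Sum.inr v) = q}.ncard = 2 ∧
      ∀ q : Fin (k + 3), (∃ v : Fin 2 × ChainV l k B, c (Sum.inr v) = q) →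
        ¬ ∃ f : FlowerV l k B a, c (Sum.inl f) = q := by
  obtain ⟨hprop, -, -⟩ := hc
  -- flower-chain adjacency
  have hfc : ∀ (f : FlowerV l k B a) (v : Fin 2 × ChainV l k B),
      (reductionGraph l k B a).Adj (Sum.inl f) (Sum.inr v) := fun f v => trivial
  set S : Set (Fin (k+3)) := {q | ∃ v : Fin 2 × ChainV l k B, c (Sum.inr v) = q} with hSdef
  set F : Set (Fin (k+3)) := {q | ∃ f : FlowerV l k B a, c (Sum.inl f) = q} with hFdef
  have hdisj : Disjoint S F := by
    rw [Set.disjoint_left]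
    rintro q ⟨v, hv⟩ ⟨f, hf⟩
    exact hprop (hfc f v) (hf.trans hv.symm)
  -- a clique of size k+1 in the flower F_{B,k}
  let w : Option (Fin k) → FlowerV l k B a :=
    fun o => ⟨none, o.map (fun p => (⟨0, Nat.succ_pos B⟩, p))⟩
  have hwadj : ∀ o o' : Option (Fin k), o ≠ o' →
      (reductionGraph l k B a).Adj (Sum.inl (w o)) (Sum.inl (w o')) := by
    intro o o' hne
    refine ⟨rfl, ?_, ?_⟩
    · intro h
      apply hne
      have h2 := Sigma.ext_iff.mp h
      have h3 : o.map (fun p => ((⟨0, Nat.succ_pos B⟩ : Fin (B+1)), p)) =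
          o'.map (fun p => ((⟨0, Nat.succ_pos B⟩ : Fin (B+1)), p)) := eq_of_heq h2.2
      exact Option.map_injective (fun x y hxy => (Prod.mk.injEq _ _ _ _).mp hxy |>.2) h3
    · intro i p i' p' h1 h2
      obtain ⟨x, hx, hg⟩ := Option.map_eq_some_iff.mp h1
      obtain ⟨x', hx', hg'⟩ := Option.map_eq_some_iff.mp h2
      have : i = ⟨0, Nat.succ_pos B⟩ := (congrArg Prod.fst hg).symm
      have : (i : ℕ) = 0 := by rw [this]
      have h' : i' = ⟨0, Nat.succ_pos B⟩ := (congrArg Prod.fst hg').symm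
      have h'' : (i' : ℕ) = 0 := by rw [h']
      omega
  have hinj : Function.Injective (fun o : Option (Fin k) => c (Sum.inl (w o))) := by
    intro o o' h
    by_contra hne
    exact hprop (hwadj o o' hne) h
  have hF : k + 1 ≤ F.ncard := by
    have hsub : Set.range (fun o : Option (Fin k) => c (Sum.inl (w o))) ⊆ F := by
      rintro q ⟨o, rfl⟩; exact ⟨w o, rfl⟩
    have h1 : (Set.range (fun o : Option (Fin k) => c (Sum.inl (w o)))).ncard = k + 1 := by
      rw [← Nat.card_coe_set_eq, Nat.card_range_of_injective hinj]
      simp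
    calc k + 1 = _ := h1.symm
      _ ≤ F.ncard := Set.ncard_le_ncard hsub F.toFinite
  -- two adjacent chain vertices
  let v1 : Fin 2 × ChainV l k B := (0, ⟨⟨0, by omega⟩, ⟨0, by split <;> omega⟩⟩)
  let v2 : Fin 2 × ChainV l k B := (0, ⟨⟨1, by omega⟩, ⟨0, by split <;> omega⟩⟩)
  have hadj : (reductionGraph l k B a).Adj (Sum.inr v1) (Sum.inr v2) := ⟨rfl, Or.inl rfl⟩
  have hne12 : c (Sum.inr v1) ≠ c (Sum.inr v2) := hprop hadj
  have hS : 2 ≤ S.ncard := by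
    have hsub : {c (Sum.inr v1), c (Sum.inr v2)} ⊆ S := by
      rintro q (rfl | rfl)
      · exact ⟨v1, rfl⟩
      · exact ⟨v2, rfl⟩
    calc 2 = ({c (Sum.inr v1), c (Sum.inr v2)} : Set (Fin (k+3))).ncard :=
          (Set.ncard_pair hne12).symm
      _ ≤ S.ncard := Set.ncard_le_ncard hsub S.toFinite
  have hSF : S.ncard + F.ncard ≤ k + 3 := by
    rw [← Set.ncard_union_eq hdisj S.toFinite F.toFinite]
    calc (S ∪ F).ncard ≤ (Set.univ : Set (Fin (k+3))).ncard :=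
          Set.ncard_le_ncard (Set.subset_univ _) Set.finite_univ
      _ = k + 3 := by simp [Set.ncard_univ]
  refine ⟨by omega, ?_⟩
  rintro q ⟨v, hv⟩ ⟨f, hf⟩
  exact hprop (hfc f v) (hf.trans hv.symm)
end

section
/- Let G be a finite simple graph with weight function w : V(G) → ℕ and type partition {V_1,...,V_t}. Then there exists an optimal w-multicoloring C of G such that, for every class V_x that induces an independent set in G, C(u) ⊆ C(v_x) for all u ∈ V_x, where v_x is a vertex of V_x maximizing |C(u)| over u ∈ V_x. -/
open scoped Classical

open scoped Classical

/-- A `w`-multicoloring: each vertex `v` gets a set of `w v` colors, adjacent vertices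
getting disjoint sets. -/
def IsMulticoloring {V : Type*} (G : SimpleGraph V) (w : V → ℕ) (C : V → Finset ℕ) : Prop :=
  (∀ v, (C v).card = w v) ∧ ∀ ⦃u v⦄, G.Adj u v → Disjoint (C u) (C v)

/-- The total number of distinct colors used. -/
noncomputable def colorsUsed {V : Type*} (C : V → Finset ℕ) : ℕ :=
  (⋃ v, (C v : Set ℕ)).ncard

/-- An optimal `w`-multicoloring: one using the minimum total number of colors. -/
def IsOptimalMulticoloring {V : Type*} (G : SimpleGraph V) (w : V → ℕ)
    (C : V → Finset ℕ) : Prop :=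
  IsMulticoloring G w C ∧
    ∀ C' : V → Finset ℕ, IsMulticoloring G w C' → colorsUsed C ≤ colorsUsed C'

noncomputable def pickMax {V : Type} (C : V → Finset ℕ) (s : Finset V) (d : V) : V :=
  if h : ∃ v ∈ s, ∀ u ∈ s, (C u).card ≤ (C v).card then h.choose else d

lemma pickMax_spec {V : Type} {C : V → Finset ℕ} {s : Finset V}
    (h : ∃ v ∈ s, ∀ u ∈ s, (C u).card ≤ (C v).card) (d : V) :
    pickMax C s d ∈ s ∧ ∀ u ∈ s, (C u).card ≤ (C (pickMax C s d)).card := by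
  rw [pickMax, dif_pos h]; exact h.choose_spec

lemma pickMax_default_irrel {V : Type} {C : V → Finset ℕ} {s : Finset V}
    (h : ∃ v ∈ s, ∀ u ∈ s, (C u).card ≤ (C v).card) (d d' : V) :
    pickMax C s d = pickMax C s d' := by
  rw [pickMax, pickMax, dif_pos h, dif_pos h]

/-- There is an optimal `w`-multicoloring in which, on every independent class of the
type partition, all color sets are contained in the color set of a vertex with the most
colors. -/
theorem exists_optimal_multicoloring_nested {V : Type} [Fintype V] (G : SimpleGraph V)
    (w : V → ℕ) :
    ∃ C : V → Finset ℕ, IsOptimalMulticoloring G w C ∧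
      ∀ v0 : V, ({u | sameType G u v0}.Pairwise fun a b => ¬ G.Adj a b) →
        ∃ v : V, sameType G v v0 ∧
          (∀ u : V, sameType G u v0 → (C u).card ≤ (C v).card) ∧
          ∀ u : V, sameType G u v0 → C u ⊆ C v := by
  classical
  have heq := sameType_equivalence G
  -- there exists at least one multicoloring
  have hex : ∃ C : V → Finset ℕ, IsMulticoloring G w C := by
    refine ⟨fun v => (Finset.range (w v)).image fun k =>
      Nat.pair ((Fintype.equivFin V) v) k, fun v => ?_, fun u v huv => ?_⟩
    · rw [Finset.card_image_of_injective _ fun a b hab => (Nat.pair_eq_pair.mp hab).2,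
        Finset.card_range]
    · rw [Finset.disjoint_left]
      intro a ha hb
      simp only [Finset.mem_image, Finset.mem_range] at ha hb
      obtain ⟨k, -, hk⟩ := ha
      obtain ⟨l, -, hl⟩ := hb
      have h1 := (Nat.pair_eq_pair.mp (hk.trans hl.symm)).1
      exact huv.ne ((Fintype.equivFin V).injective (Fin.val_injective h1))
  obtain ⟨C0, hC0⟩ := hex
  have hSne : (Set.Nonempty {n | ∃ C, IsMulticoloring G w C ∧ colorsUsed C = n}) :=
    ⟨colorsUsed C0, C0, hC0, rfl⟩
  obtain ⟨C, hC, hCval⟩ := Nat.sInf_mem hSne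
  have hopt : ∀ C', IsMulticoloring G w C' → colorsUsed C ≤ colorsUsed C' := by
    intro C' h'
    rw [hCval]
    exact Nat.sInf_le ⟨C', h', rfl⟩
  -- type classes as finsets
  set cls : V → Finset V := fun v0 => Finset.univ.filter fun x => sameType G x v0 with hcls
  have hcls_eq : ∀ {u v0 : V}, sameType G u v0 → cls u = cls v0 := by
    intro u v0 h
    ext x
    simp only [hcls, Finset.mem_filter, Finset.mem_univ, true_and]
    exact ⟨fun hx => heq.trans hx h, fun hx => heq.trans hx (heq.symm h)⟩
  have hmemcls : ∀ v0 : V, v0 ∈ cls v0 := fun v0 => by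
    simp [hcls, heq.refl v0]
  have hexmax : ∀ v0 : V, ∃ v ∈ cls v0, ∀ u ∈ cls v0, (C u).card ≤ (C v).card :=
    fun v0 => Finset.exists_max_image (cls v0) (fun u => (C u).card) ⟨v0, hmemcls v0⟩
  set vm : V → V := fun v0 => pickMax C (cls v0) v0 with hvm
  have hvm_mem : ∀ v0, vm v0 ∈ cls v0 := fun v0 => (pickMax_spec (hexmax v0) v0).1
  have hvm_max : ∀ v0, ∀ u ∈ cls v0, (C u).card ≤ (C (vm v0)).card :=
    fun v0 => (pickMax_spec (hexmax v0) v0).2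
  have hvm_eq : ∀ {u v0 : V}, sameType G u v0 → vm u = vm v0 := by
    intro u v0 h
    simp only [hvm]
    rw [hcls_eq h]
    exact pickMax_default_irrel (hexmax v0) u v0
  have hvm_st : ∀ v0, sameType G (vm v0) v0 := by
    intro v0
    have := hvm_mem v0
    simpa [hcls] using this
  -- independence predicate
  set Ind : V → Prop := fun v0 => ({u | sameType G u v0}).Pairwise fun a b => ¬ G.Adj a b
    with hInd
  have hInd_eq : ∀ {u v0 : V}, sameType G u v0 → (Ind u ↔ Ind v0) := by
    intro u v0 h
    have hs : {x | sameType G x u} = {x | sameType G x v0} := by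
      ext x
      exact ⟨fun hx => heq.trans hx h, fun hx => heq.trans hx (heq.symm h)⟩
    simp only [hInd, hs]
  -- key adjacency transfer
  have hkey : ∀ u a : V, Ind u → G.Adj u a → G.Adj (vm u) a := by
    intro u a hi hadj
    have hst := hvm_st u
    have hau : a ≠ vm u := by
      intro h
      subst h
      exact hi (heq.refl u) hst hadj.ne hadj
    have hiff := Set.ext_iff.mp hst a
    simp only [Set.mem_diff, SimpleGraph.mem_neighborSet, Set.mem_singleton_iff] at hiff
    exact (hiff.mp ⟨hadj, hau⟩).1
  -- the modified coloring
  have hle : ∀ v, w v ≤ (C (vm v)).card := fun v => by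
    rw [← hC.1 v]; exact hvm_max v v (hmemcls v)
  set Snew : V → Finset ℕ := fun v =>
    (Finset.exists_subset_card_eq (hle v)).choose with hSnew
  have hSsub : ∀ v, Snew v ⊆ C (vm v) :=
    fun v => (Finset.exists_subset_card_eq (hle v)).choose_spec.1
  have hScard : ∀ v, (Snew v).card = w v :=
    fun v => (Finset.exists_subset_card_eq (hle v)).choose_spec.2
  set C' : V → Finset ℕ := fun v => if Ind v then Snew v else C v with hC'
  have hcards : ∀ v, (C' v).card = w v := by
    intro v
    simp only [hC']
    split
    · exact hScard v
    · exact hC.1 v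
  have hdisj : ∀ ⦃u v : V⦄, G.Adj u v → Disjoint (C' u) (C' v) := by
    intro u v hadj
    simp only [hC']
    by_cases hu : Ind u <;> by_cases hv : Ind v <;>
      simp only [if_pos, if_neg, hu, hv, if_true, if_false]
    · have h1 : G.Adj (vm u) v := hkey u v hu hadj
      have h2 : G.Adj (vm v) (vm u) := hkey v (vm u) hv h1.symm
      exact (hC.2 h2.symm).mono (hSsub u) (hSsub v)
    · exact (hC.2 (hkey u v hu hadj)).mono (hSsub u) (Finset.Subset.refl _)
    · exact (hC.2 (hkey v u hv hadj.symm).symm).mono (Finset.Subset.refl _) (hSsub v)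
    · exact hC.2 hadj
  have hcol : colorsUsed C' ≤ colorsUsed C := by
    have hsub : (⋃ v, (C' v : Set ℕ)) ⊆ ⋃ v, (C v : Set ℕ) := by
      intro x hx
      simp only [Set.mem_iUnion] at hx ⊢
      obtain ⟨v, hv⟩ := hx
      by_cases h : Ind v
      · exact ⟨vm v, hSsub v (by simpa [hC', h] using hv)⟩
      · exact ⟨v, by simpa [hC', h] using hv⟩
    have hfin : (⋃ v, ((C v : Set ℕ))).Finite :=
      Set.finite_iUnion fun v => (C v).finite_toSet
    exact Set.ncard_le_ncard hsub hfin
  refine ⟨C', ⟨⟨hcards, hdisj⟩, fun C'' h'' => le_trans hcol (hopt C'' h'')⟩, ?_⟩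
  intro v0 hind0
  have hind0' : Ind v0 := hind0
  refine ⟨vm v0, hvm_st v0, ?_, ?_⟩
  · intro u hu
    rw [hcards u, hcards (vm v0), ← hC.1 u, ← hC.1 (vm v0)]
    exact hvm_max v0 u (by simp [hcls, hu])
  · intro u hu
    have hiu : Ind u := (hInd_eq hu).mpr hind0'
    have hiv : Ind (vm v0) := (hInd_eq (hvm_st v0)).mpr hind0'
    have e1 : vm u = vm v0 := hvm_eq hu
    have e2 : vm (vm v0) = vm v0 := hvm_eq (hvm_st v0)
    have hv_eq : C' (vm v0) = C (vm v0) := by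
      have hsub' : Snew (vm v0) ⊆ C (vm v0) := by
        have := hSsub (vm v0); rwa [e2] at this
      have hcard' : (C (vm v0)).card ≤ (Snew (vm v0)).card := by
        rw [hScard, ← hC.1]
      simp only [hC', if_pos hiv]
      exact Finset.eq_of_subset_of_card_le hsub' hcard'
    rw [hv_eq]
    simp only [hC', if_pos hiu]
    have := hSsub u
    rwa [e1] at this
end

section
/- Let H be a finite simple graph that is not a base graph, with weight function w : V(H) → ℕ, type partition {V_1,...,V_t} and type graph H'. Define w'(x) = Σ_{u∈V_x} w(u) if V_x induces a clique in H, and w'(x) = max_{u∈V_x} w(u) if V_x induces an independent set. Let C' be an optimal w'-multicoloring of H', and let C be obtained as follows: for each clique class V_x, partition C'(x) into sets C(u), u ∈ V_x, with |C(u)| = w(u); for each independent class V_x, assign to each u ∈ V_x an arbitrary subset C(u) ⊆ C'(x) with |C(u)| = w(u). Then C is an optimal w-multicoloring of H; in particular the minimum number of colors of a w-multicoloring of H equals the minimum number of colors of a w'-multicoloring of H'. -/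
open scoped Classical

open scoped Classical

private lemma sameType_adj_aux {V : Type} (H : SimpleGraph V) {p q r : V}
    (h : sameType H p q) (ha : H.Adj p r) (hr : r ≠ q) : H.Adj q r := by
  have hm : r ∈ H.neighborSet p \ {q} := ⟨ha, hr⟩
  rw [← h] at hm
  exact hm.1

private lemma clique_of_adj_sameType {V : Type} (H : SimpleGraph V) {u v : V}
    (hst : sameType H u v) (hadj : H.Adj u v) :
    H.IsClique (typeClass H (Quotient.mk (typeSetoid H) u)) := by
  have E := sameType_equivalence H
  intro a ha b hb hab
  have hau : sameType H u a := E.symm (Quotient.eq.mp ha)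
  have hbu : sameType H u b := E.symm (Quotient.eq.mp hb)
  have key : ∀ c : V, sameType H u c → c ≠ v → H.Adj c v := fun c hc hcv =>
    sameType_adj_aux H hc hadj (Ne.symm hcv)
  by_cases hbv : b = v
  · subst hbv; exact key a hau hab
  · by_cases hav : a = v
    · subst hav; exact (key b hbu hbv).symm
    · have h1 : H.Adj a v := key a hau hav
      have hvb : sameType H v b := E.trans (E.symm hst) hbu
      exact (sameType_adj_aux H hvb h1.symm hab).symm

private lemma typeGraph_adj_of_adj {V : Type} (H : SimpleGraph V) {u v : V}
    (hne : Quotient.mk (typeSetoid H) u ≠ Quotient.mk (typeSetoid H) v)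
    (hadj : H.Adj u v) :
    (typeGraph H).Adj (Quotient.mk (typeSetoid H) u) (Quotient.mk (typeSetoid H) v) := by
  have E := sameType_equivalence H
  refine ⟨hne, fun a b ha hb => ?_⟩
  have hua : sameType H u a := E.symm (Quotient.eq.mp (ha.trans rfl))
  have hvb : sameType H v b := E.symm (Quotient.eq.mp (hb.trans rfl))
  have hav : a ≠ v := fun h => hne (by rw [← ha, h])
  have hab : a ≠ b := fun h => hne (by rw [← ha, h, hb])
  have h1 : H.Adj a v := sameType_adj_aux H hua hadj (Ne.symm hav)
  exact (sameType_adj_aux H hvb h1.symm hab).symm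

/-- Correctness of the recursive step of the coloring algorithm. -/
theorem multicoloring_recursive_step {V : Type} [Fintype V] (H : SimpleGraph V)
    (hnb : ¬ IsBaseGraph H) (w : V → ℕ) (w' : Quotient (typeSetoid H) → ℕ)
    (hw'c : ∀ x, H.IsClique (typeClass H x) → w' x = ∑ᶠ u ∈ typeClass H x, w u)
    (hw'i : ∀ x, ¬ H.IsClique (typeClass H x) → w' x = sSup (w '' typeClass H x))
    (C' : Quotient (typeSetoid H) → Finset ℕ)
    (hC' : IsOptimalMulticoloring (typeGraph H) w' C')
    (C : V → Finset ℕ)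
    (hsub : ∀ v, C v ⊆ C' (Quotient.mk (typeSetoid H) v))
    (hcard : ∀ v, (C v).card = w v)
    (hdisj : ∀ u v : V, u ≠ v → sameType H u v →
      H.IsClique (typeClass H (Quotient.mk (typeSetoid H) u)) → Disjoint (C u) (C v)) :
    IsOptimalMulticoloring H w C ∧ colorsUsed C = colorsUsed C' := by
    classical
  have E := sameType_equivalence H
  have hQeq : ∀ u v : V, Quotient.mk (typeSetoid H) u = Quotient.mk (typeSetoid H) v ↔
      sameType H u v := fun u v => Quotient.eq
  set s : Quotient (typeSetoid H) → Finset V :=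
    fun x => Finset.univ.filter (fun v => Quotient.mk (typeSetoid H) v = x) with hs
  have hmem_s : ∀ x v, v ∈ s x ↔ Quotient.mk (typeSetoid H) v = x := by
    intro x v; simp [hs]
  have hclass : ∀ x, typeClass H x = ↑(s x) := by
    intro x; ext v; simp [typeClass, hs]
  -- biUnion over a class is contained in C' x
  have hsub1 : ∀ x, (s x).biUnion C ⊆ C' x := by
    intro x c hc
    obtain ⟨v, hv, hcv⟩ := Finset.mem_biUnion.mp hc
    have h2 := hsub v hcv
    rwa [(hmem_s x v).mp hv] at h2
  have hcliquecard : ∀ x, H.IsClique (typeClass H x) →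
      ((s x).biUnion C).card = (C' x).card := by
    intro x hcl
    have hpd : ∀ u ∈ s x, ∀ v ∈ s x, u ≠ v → Disjoint (C u) (C v) := by
      intro u hu v hv huv
      have hu' := (hmem_s x u).mp hu
      have hv' := (hmem_s x v).mp hv
      have hst : sameType H u v := (hQeq u v).mp (by rw [hu', hv'])
      have hcl' : H.IsClique (typeClass H (Quotient.mk (typeSetoid H) u)) := by
        rw [hu']; exact hcl
      exact hdisj u v huv hst hcl'
    rw [Finset.card_biUnion hpd, hC'.1.1 x, hw'c x hcl, hclass x, finsum_mem_coe_finset]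
    exact Finset.sum_congr rfl (fun v _ => hcard v)
  -- each class's pieces exactly cover C' x
  have hkey : ∀ x, (s x).biUnion C = C' x := by
    intro x
    by_cases hcl : H.IsClique (typeClass H x)
    · exact Finset.eq_of_subset_of_card_le (hsub1 x) (le_of_eq (hcliquecard x hcl).symm)
    · refine Finset.Subset.antisymm (hsub1 x) ?_
      obtain ⟨u0, hu0⟩ := Quotient.exists_rep x
      have hne0 : (w '' typeClass H x).Nonempty := ⟨w u0, u0, hu0, rfl⟩
      have hfin : (w '' typeClass H x).Finite := (Set.toFinite _).image w
      obtain ⟨u, hu, hwu⟩ := hne0.csSup_mem hfin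
      have hu' : Quotient.mk (typeSetoid H) u = x := hu
      have hcu : C u = C' x := by
        apply Finset.eq_of_subset_of_card_le
        · have h2 := hsub u; rwa [hu'] at h2
        · rw [hC'.1.1 x, hw'i x hcl, ← hwu]
          exact (hcard u).ge
      rw [← hcu]
      exact Finset.subset_biUnion_of_mem C ((hmem_s x u).mpr hu')
  -- C is a multicoloring
  have hmc : IsMulticoloring H w C := by
    refine ⟨hcard, fun u v huv => ?_⟩
    by_cases hq : Quotient.mk (typeSetoid H) u = Quotient.mk (typeSetoid H) v
    · exact hdisj u v huv.ne ((hQeq u v).mp hq)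
        (clique_of_adj_sameType H ((hQeq u v).mp hq) huv)
    · exact (hC'.1.2 (typeGraph_adj_of_adj H hq huv)).mono (hsub u) (hsub v)
  have hunion : (⋃ v, ((C v : Set ℕ))) = ⋃ x, ((C' x : Set ℕ)) := by
    apply Set.Subset.antisymm
    · exact Set.iUnion_subset fun v => Set.subset_iUnion_of_subset
        (Quotient.mk (typeSetoid H) v) (fun c hc => hsub v hc)
    · refine Set.iUnion_subset fun x => ?_
      intro c hc
      rw [← hkey x] at hc
      obtain ⟨v, _, hcv⟩ := Finset.mem_biUnion.mp hc
      exact Set.mem_iUnion.mpr ⟨v, hcv⟩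
  have hcolors : colorsUsed C = colorsUsed C' := by
    unfold colorsUsed; rw [hunion]
  refine ⟨⟨hmc, ?_⟩, hcolors⟩
  intro C'' hC''
  have hbig : ∀ x, w' x ≤ ((s x).biUnion C'').card := by
    intro x
    by_cases hcl : H.IsClique (typeClass H x)
    · have hpd : ∀ u ∈ s x, ∀ v ∈ s x, u ≠ v → Disjoint (C'' u) (C'' v) := by
        intro u hu v hv huv
        have hu' : u ∈ typeClass H x := by rw [hclass x]; exact hu
        have hv' : v ∈ typeClass H x := by rw [hclass x]; exact hv
        exact hC''.2 (hcl hu' hv' huv)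
      rw [Finset.card_biUnion hpd, hw'c x hcl, hclass x, finsum_mem_coe_finset]
      exact le_of_eq (Finset.sum_congr rfl (fun v _ => (hC''.1 v).symm))
    · obtain ⟨u0, hu0⟩ := Quotient.exists_rep x
      have hne0 : (w '' typeClass H x).Nonempty := ⟨w u0, u0, hu0, rfl⟩
      have hfin : (w '' typeClass H x).Finite := (Set.toFinite _).image w
      obtain ⟨u, hu, hwu⟩ := hne0.csSup_mem hfin
      have hu' : Quotient.mk (typeSetoid H) u = x := hu
      calc w' x = w u := by rw [hw'i x hcl, ← hwu]
        _ = (C'' u).card := (hC''.1 u).symm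
        _ ≤ ((s x).biUnion C'').card :=
          Finset.card_le_card (Finset.subset_biUnion_of_mem C'' ((hmem_s x u).mpr hu'))
  have hex : ∀ x, ∃ t ⊆ (s x).biUnion C'', t.card = w' x :=
    fun x => Finset.exists_subset_card_eq (hbig x)
  choose D hDsub hDcard using hex
  have hD : IsMulticoloring (typeGraph H) w' D := by
    refine ⟨hDcard, fun x y hxy => ?_⟩
    have hdd : Disjoint ((s x).biUnion C'') ((s y).biUnion C'') := by
      rw [Finset.disjoint_left]
      intro c hcx hcy
      obtain ⟨u, hu, hcu⟩ := Finset.mem_biUnion.mp hcx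
      obtain ⟨v, hv, hcv⟩ := Finset.mem_biUnion.mp hcy
      have hadj : H.Adj u v := hxy.2 u v ((hmem_s x u).mp hu) ((hmem_s y v).mp hv)
      exact Finset.disjoint_left.mp (hC''.2 hadj) hcu hcv
    exact hdd.mono (hDsub x) (hDsub y)
  have h1 : colorsUsed C' ≤ colorsUsed D := hC'.2 D hD
  have h2 : colorsUsed D ≤ colorsUsed C'' := by
    unfold colorsUsed
    apply Set.ncard_le_ncard
    · refine Set.iUnion_subset fun x => ?_
      intro c hc
      have h3 := hDsub x hc
      obtain ⟨v, _, hcv⟩ := Finset.mem_biUnion.mp h3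
      exact Set.mem_iUnion.mpr ⟨v, hcv⟩
    · exact Set.finite_iUnion fun v => (C'' v).finite_toSet
  calc colorsUsed C = colorsUsed C' := hcolors
    _ ≤ colorsUsed D := h1
    _ ≤ colorsUsed C'' := h2
end

section
/- Let H be a finite simple graph with weight functions w, s : V(H) → ℕ satisfying w(v) ≤ s(v) for all v, let {V_1,...,V_t} be its type partition and H' its type graph. Define, for each class x: w'(x) = min_{v∈V_x}( w(v) + Σ_{u∈V_x, u≠v} s(u) ) if V_x induces a clique, and w'(x) = Σ_{u∈V_x} w(u) otherwise; and s'(x) = Σ_{u∈V_x} s(u). If C' is a vertex cover of H', then the set C ⊆ V(H) consisting of all of V_x for every x ∈ C', together with V_x \ {v_x} for every clique class x ∉ C' (where v_x is a vertex of V_x maximizing s(u) − w(u)), is a vertex cover of H and satisfies Σ_{v∈C} s(v) + Σ_{v∉C} w(v) = Σ_{x∈C'} s'(x) + Σ_{x∉C'} w'(x). -/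
open scoped Classical

open scoped Classical

/-- The cost of a candidate vertex cover `C` with respect to the weights `w ≤ s`:
`Σ_{v ∈ C} s v + Σ_{v ∉ C} w v`. -/
noncomputable def vcCost {V : Type*} (w s : V → ℕ) (C : Set V) : ℕ :=
  (∑ᶠ v ∈ C, s v) + ∑ᶠ v ∈ Cᶜ, w v


section Helpers

variable {V : Type*} {G : SimpleGraph V}

lemma sameType_adj_trans {p q r : V} (h : sameType G p q) (hr : G.Adj p r)
    (hrq : r ≠ q) : G.Adj q r := by
  have := Set.ext_iff.mp h r
  simp only [Set.mem_diff, SimpleGraph.mem_neighborSet, Set.mem_singleton_iff] at this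
  exact (this.mpr ⟨hr, hrq⟩).1

lemma sameType_of_mk_eq {u v : V}
    (h : Quotient.mk (typeSetoid G) u = Quotient.mk (typeSetoid G) v) :
    sameType G u v := Quotient.eq.mp h

lemma mem_typeClass_iff {v : V} {x : Quotient (typeSetoid G)} :
    v ∈ typeClass G x ↔ Quotient.mk (typeSetoid G) v = x := Iff.rfl

/-- If a type class contains an adjacent pair, it is a clique. -/
lemma isClique_of_adj {u v : V}
    (h : Quotient.mk (typeSetoid G) u = Quotient.mk (typeSetoid G) v)
    (huv : G.Adj u v) :
    G.IsClique (typeClass G (Quotient.mk (typeSetoid G) u)) := by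
  have key : ∀ c ∈ typeClass G (Quotient.mk (typeSetoid G) u), c ≠ u → G.Adj u c := by
    intro c hc hcu
    have hvc : sameType G v c := sameType_of_mk_eq (h.symm.trans hc.symm)
    exact (sameType_adj_trans hvc huv.symm (Ne.symm hcu)).symm
  intro a ha b hb hab
  have hub : b = u ∨ G.Adj u b := by
    by_cases hbu : b = u
    · exact Or.inl hbu
    · exact Or.inr (key b hb hbu)
  by_cases hau : a = u
  · subst hau
    rcases hub with h1 | h1
    · exact absurd h1 hab.symm
    · exact h1
  · have hua : sameType G u a := sameType_of_mk_eq ha.symm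
    rcases hub with h1 | h1
    · subst h1; exact (key a ha hau).symm
    · exact sameType_adj_trans hua h1 (Ne.symm hab)

end Helpers

/-- Lifting a vertex cover of the type graph to a vertex cover of `H` of equal cost. -/
theorem wvc_lift {V : Type} [Fintype V] (H : SimpleGraph V) (w s : V → ℕ)
    (hws : ∀ v, w v ≤ s v)
    (w' s' : Quotient (typeSetoid H) → ℕ)
    (hw'c : ∀ x, H.IsClique (typeClass H x) →
      w' x = sInf ((fun v => w v + ∑ᶠ u ∈ typeClass H x \ {v}, s u) '' typeClass H x))
    (hw'i : ∀ x, ¬ H.IsClique (typeClass H x) → w' x = ∑ᶠ u ∈ typeClass H x, w u)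
    (hs' : ∀ x, s' x = ∑ᶠ u ∈ typeClass H x, s u)
    (f : Quotient (typeSetoid H) → V)
    (hf1 : ∀ x, Quotient.mk (typeSetoid H) (f x) = x)
    (hf2 : ∀ x, ∀ u ∈ typeClass H x, s u - w u ≤ s (f x) - w (f x))
    (C' : Set (Quotient (typeSetoid H))) (hC' : IsVertexCover (typeGraph H) C')
    (C : Set V)
    (hC : C = {v | Quotient.mk (typeSetoid H) v ∈ C' ∨
      (H.IsClique (typeClass H (Quotient.mk (typeSetoid H) v)) ∧
        Quotient.mk (typeSetoid H) v ∉ C' ∧ v ≠ f (Quotient.mk (typeSetoid H) v))}) :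
    IsVertexCover H C ∧ vcCost w s C = vcCost w' s' C' := by
  classical
  set mk : V → Quotient (typeSetoid H) := Quotient.mk (typeSetoid H) with hmk
  have hCmem : ∀ v : V, v ∈ C ↔ (mk v ∈ C' ∨
      (H.IsClique (typeClass H (mk v)) ∧ mk v ∉ C' ∧ v ≠ f (mk v))) := by
    intro v; rw [hC]; rfl
  constructor
  · -- vertex cover
    intro u v huv
    by_cases hxy : mk u = mk v
    · -- same class, necessarily a clique
      have hclique : H.IsClique (typeClass H (mk u)) := isClique_of_adj hxy huv
      by_cases hx : mk u ∈ C'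
      · left; exact (hCmem u).mpr (Or.inl hx)
      · by_cases hu : u = f (mk u)
        · right
          refine (hCmem v).mpr (Or.inr ?_)
          rw [← hxy]
          exact ⟨hclique, hx, fun hv => huv.ne (hu.trans hv.symm)⟩
        · left; exact (hCmem u).mpr (Or.inr ⟨hclique, hx, hu⟩)
    · -- different classes: adjacency in the type graph
      have hadj : (typeGraph H).Adj (mk u) (mk v) := by
        refine ⟨hxy, fun a b ha hb => ?_⟩
        have hub : H.Adj u b := by
          have hvb : sameType H v b := sameType_of_mk_eq hb.symm
          have hune : u ≠ b := by
            rintro rfl; exact hxy hb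
          exact (sameType_adj_trans hvb huv.symm hune).symm
        have hua : sameType H u a := sameType_of_mk_eq ha.symm
        have hba : b ≠ a := by
          rintro rfl; exact hxy (ha.symm.trans hb)
        exact sameType_adj_trans hua hub hba
      rcases hC' hadj with h | h
      · left; exact (hCmem u).mpr (Or.inl h)
      · right; exact (hCmem v).mpr (Or.inl h)
  · -- cost equality
    set fib : Quotient (typeSetoid H) → Finset V :=
      fun x => Finset.univ.filter (fun v => mk v = x) with hfib
    have hfsgen : ∀ {α : Type} [Fintype α] (A : Set α) (g : α → ℕ),
        (∑ᶠ v ∈ A, g v) = ∑ v ∈ Finset.univ.filter (· ∈ A), g v := by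
      intro α _ A g
      rw [← finsum_mem_coe_finset]
      congr 1
      ext v; simp
    have htc : ∀ x, Finset.univ.filter (· ∈ typeClass H x) = fib x := by
      intro x
      ext v; simp only [Finset.mem_filter, Finset.mem_univ, true_and, hfib] <;> rfl
    have hfinsum : ∀ (x) (g : V → ℕ), (∑ᶠ u ∈ typeClass H x, g u) = ∑ u ∈ fib x, g u := by
      intro x g; rw [hfsgen, htc]
    have hfinsum' : ∀ (x) (v : V) (g : V → ℕ),
        (∑ᶠ u ∈ typeClass H x \ {v}, g u) = ∑ u ∈ (fib x).erase v, g u := by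
      intro x v g
      rw [hfsgen]
      congr 1
      ext u
      simp only [Finset.mem_filter, Finset.mem_univ, true_and, Set.mem_diff,
        Set.mem_singleton_iff, Finset.mem_erase, hfib, typeClass, Set.mem_setOf_eq]
      tauto
    have hfx : ∀ x, f x ∈ fib x := by
      intro x
      simp only [hfib, Finset.mem_filter, Finset.mem_univ, true_and]
      exact hf1 x
    have hfx' : ∀ x, f x ∈ typeClass H x := fun x => hf1 x
    -- LHS as a single sum over V
    have hcost : ∀ {α : Type} [Fintype α] (w s : α → ℕ) (A : Set α),
        vcCost w s A = ∑ v : α, (if v ∈ A then s v else w v) := by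
      intro α _ w s A
      unfold vcCost
      rw [hfsgen, hfsgen, Finset.sum_ite]
      congr 2
      ext v; simp
    rw [hcost w s C, hcost w' s' C']
    -- fiberwise decomposition
    rw [← Finset.sum_fiberwise Finset.univ mk (fun v => if v ∈ C then s v else w v)]
    -- per-class computation
    refine Finset.sum_congr rfl (fun x _ => ?_)
    change (∑ v ∈ fib x, if v ∈ C then s v else w v) = _
    have hmem : ∀ v ∈ fib x, mk v = x := by
      intro v hv; simpa [hfib] using hv
    by_cases hx : x ∈ C'
    · -- whole class inside C
      rw [if_pos hx, hs' x, hfinsum]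
      refine Finset.sum_congr rfl (fun v hv => ?_)
      rw [if_pos ((hCmem v).mpr (Or.inl (by rw [hmem v hv]; exact hx)))]
    · rw [if_neg hx]
      by_cases hcl : H.IsClique (typeClass H x)
      · -- clique class: C contains everything but f x
        have hvC : ∀ v ∈ fib x, (v ∈ C ↔ v ≠ f x) := by
          intro v hv
          rw [hCmem v, hmem v hv]
          constructor
          · rintro (h | ⟨-, -, h⟩)
            · exact absurd h hx
            · exact h
          · intro h; exact Or.inr ⟨hcl, hx, h⟩
        have hsum : (∑ v ∈ fib x, if v ∈ C then s v else w v)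
            = w (f x) + ∑ v ∈ (fib x).erase (f x), s v := by
          rw [← Finset.add_sum_erase _ _ (hfx x)]
          congr 1
          · rw [if_neg (by simp [hvC _ (hfx x)])]
          · refine Finset.sum_congr rfl (fun v hv => ?_)
            rw [if_pos ((hvC v (Finset.mem_of_mem_erase hv)).mpr
              (Finset.ne_of_mem_erase hv))]
        rw [hsum, hw'c x hcl]
        -- compute the infimum
        set val : V → ℕ := fun v => w v + ∑ᶠ u ∈ typeClass H x \ {v}, s u with hval
        have hval' : ∀ v, val v = w v + ∑ u ∈ (fib x).erase v, s u := by
          intro v; rw [hval]; simp only; rw [hfinsum']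
        have hmemval : w (f x) + ∑ v ∈ (fib x).erase (f x), s v ∈ val '' typeClass H x :=
          ⟨f x, hfx' x, hval' (f x)⟩
        have hne : (val '' typeClass H x).Nonempty := ⟨val (f x), ⟨f x, hfx' x, rfl⟩⟩
        refine le_antisymm ?_ (Nat.sInf_le hmemval)
        refine le_csInf hne ?_
        rintro b ⟨v, hv, rfl⟩
        have hvfib : v ∈ fib x := by simp [hfib, hmk]; exact hv
        rw [hval' v]
        have h1 : s v + ∑ u ∈ (fib x).erase v, s u = ∑ u ∈ fib x, s u :=
          Finset.add_sum_erase _ _ hvfib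
        have h2 : s (f x) + ∑ u ∈ (fib x).erase (f x), s u = ∑ u ∈ fib x, s u :=
          Finset.add_sum_erase _ _ (hfx x)
        have h3 : s v - w v ≤ s (f x) - w (f x) := hf2 x v hv
        have h4 : w v ≤ s v := hws v
        have h5 : w (f x) ≤ s (f x) := hws (f x)
        omega
      · -- independent class: C misses the whole class
        rw [hw'i x hcl, hfinsum]
        refine Finset.sum_congr rfl (fun v hv => ?_)
        rw [if_neg]
        rw [hCmem v, hmem v hv]
        rintro (h | ⟨h, -, -⟩)
        · exact hx h
        · exact hcl h
end
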